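/- For every bounded Lebesgue-measurable φ : ℝ → ℝ^{m+1} and every t ∈ ℝ, one has |(Tφ)₀(t)| ≤ m₀/k₀ + (I₀ + m_J)·e^{k₀ω}/(1 − e^{−k₀ω}) and |(Tφ)_j(t)| ≤ m_j/k_j for j = 1,…,m; in particular T maps bounded measurable functions into the set Ω. -/

import Mathlib

open MeasureTheory Real Set Filter in
private lemma myIntExp {c : ℝ} (hc : 0 < c) (a : ℝ) :
    ∫ y in Set.Ioi a, Real.exp (-c * y) = Real.exp (-c * a) / c := by
  have hderiv : ∀ x ∈ Set.Ici a, HasDerivAt (fun y => -Real.exp (-c * y) / c) (Real.exp (-c * x)) x := by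
    intro x _
    have h1 : HasDerivAt (fun y : ℝ => -c * y) (-c) x := by
      simpa using (hasDerivAt_id x).const_mul (-c)
    have h2 := (h1.exp).neg.div_const c
    convert h2 using 1
    · rfl
    · rfl
    · rfl
    field_simp
  have hint := exp_neg_integrableOn_Ioi a hc
  have htend : Tendsto (fun y => -Real.exp (-c * y) / c) atTop (nhds 0) := by
    have h2 : Tendsto (fun y : ℝ => -c * y) atTop atBot :=
      tendsto_id.const_mul_atTop_of_neg (neg_neg_iff_pos.2 hc)
    have := (Real.tendsto_exp_atBot.comp h2).neg.div_const c
    simpa using this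
  have := integral_Ioi_of_hasDerivAt_of_tendsto' hderiv hint htend
  rw [this]; ring

open MeasureTheory Real Set Filter in
private lemma myAbsInt {c M t : ℝ} (hc : 0 < c) (hM : 0 ≤ M) {h : ℝ → ℝ}
    (hb : ∀ s, |h s| ≤ M) :
    |∫ s in Set.Iic t, Real.exp (-c * (t - s)) * h s| ≤ M / c := by
  have hflip : (∫ s in Set.Iic t, Real.exp (-c * (t - s)) * h s)
      = ∫ y in Set.Ioi (-t), Real.exp (-c * (t + y)) * h (-y) := by
    rw [← integral_comp_neg_Iic t (fun y => Real.exp (-c * (t + y)) * h (-y))]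
    simp [sub_eq_add_neg]
  rw [hflip]
  have hmaj : MeasureTheory.IntegrableOn (fun y => M * Real.exp (-c * t) * Real.exp (-c * y)) (Set.Ioi (-t)) :=
    (exp_neg_integrableOn_Ioi (-t) hc).const_mul _
  calc |∫ y in Set.Ioi (-t), Real.exp (-c*(t+y)) * h (-y)|
      ≤ ∫ y in Set.Ioi (-t), |Real.exp (-c*(t+y)) * h (-y)| := by
        simpa only [Real.norm_eq_abs] using
          MeasureTheory.norm_integral_le_integral_norm
            (μ := MeasureTheory.volume.restrict (Set.Ioi (-t)))
            (fun y => Real.exp (-c*(t+y)) * h (-y))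
    _ ≤ ∫ y in Set.Ioi (-t), M * Real.exp (-c*t) * Real.exp (-c*y) := by
        apply MeasureTheory.integral_mono_of_nonneg
        · exact Filter.Eventually.of_forall fun y => abs_nonneg _
        · exact hmaj
        · refine Filter.Eventually.of_forall fun y => ?_
          show |Real.exp (-c*(t+y)) * h (-y)| ≤ M * Real.exp (-c*t) * Real.exp (-c*y)
          rw [abs_mul, abs_of_nonneg (Real.exp_pos _).le]
          calc Real.exp (-c*(t+y)) * |h (-y)| ≤ Real.exp (-c*(t+y)) * M :=
                mul_le_mul_of_nonneg_left (hb _) (Real.exp_pos _).le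
            _ = M * Real.exp (-c*t) * Real.exp (-c*y) := by
                rw [show -c*(t+y) = -c*t + -c*y by ring, Real.exp_add]; ring
    _ = M * Real.exp (-c*t) * (Real.exp (-c*(-t)) / c) := by
        rw [MeasureTheory.integral_const_mul, myIntExp hc]
    _ = M / c := by
        have h1 : Real.exp (-c*t) * Real.exp (-c*(-t)) = 1 := by
          rw [← Real.exp_add]; norm_num
        rw [show M * Real.exp (-c*t) * (Real.exp (-c*(-t))/c)
            = M * (Real.exp (-c*t) * Real.exp (-c*(-t))) / c by ring, h1, mul_one]

open MeasureTheory Real Set Filter in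
private lemma myMeasTsum {f : ℤ → ℝ → ℝ} (hm : ∀ i, Measurable (f i))
    (hs : ∀ t, Summable fun i => f i t) : Measurable fun t => ∑' i, f i t := by
  let e : ℕ ≃ ℤ := (Denumerable.eqv ℤ).symm
  have key : ∀ t, Tendsto (fun N => ∑ j ∈ Finset.range N, f (e j) t) atTop
      (nhds (∑' i, f i t)) := by
    intro t
    have hsum : Summable fun j => f (e j) t := (e.summable_iff (f := fun i => f i t)).2 (hs t)
    have heq : ∑' j, f (e j) t = ∑' i, f i t := e.tsum_eq (fun i => f i t)
    simpa [heq] using hsum.hasSum.tendsto_sum_nat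
  exact measurable_of_tendsto_metrizable
    (fun N => Finset.measurable_sum _ (fun j _ => hm (e j)))
    (tendsto_pi_nhds.2 key)

open MeasureTheory Real Set Filter in
private lemma myMeasConv {c : ℝ} {h : ℝ → ℝ} (hh : Measurable h) :
    Measurable fun t => ∫ s in Set.Iic t, Real.exp (-c * (t - s)) * h s := by
  have heq : (fun t => ∫ s in Set.Iic t, Real.exp (-c*(t-s)) * h s)
      = fun t => ∫ s, (fun p : ℝ × ℝ =>
          if p.2 ≤ p.1 then Real.exp (-c*(p.1-p.2)) * h p.2 else 0) (t, s) := by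
    funext t
    rw [← MeasureTheory.integral_indicator measurableSet_Iic]
    simp [Set.indicator_apply, Set.mem_Iic]
  rw [heq]
  have hF : MeasureTheory.StronglyMeasurable (fun p : ℝ × ℝ =>
      if p.2 ≤ p.1 then Real.exp (-c*(p.1-p.2)) * h p.2 else 0) := by
    apply Measurable.stronglyMeasurable
    apply Measurable.ite
    · exact measurableSet_le measurable_snd measurable_fst
    · exact ((Real.continuous_exp.measurable).comp
        ((measurable_fst.sub measurable_snd).const_mul (-c))).mul (hh.comp measurable_snd)
    · exact measurable_const
  exact (MeasureTheory.StronglyMeasurable.integral_prod_right' hF).measurable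

open MeasureTheory Real Set Filter in
private lemma myPulse {k₀ ω t : ℝ} (hk : 0 < k₀) (hω : 0 < ω) {θ : ℤ → ℝ}
    (hθ : ∀ i : ℤ, (i:ℝ)*ω ≤ θ i ∧ θ i < ((i:ℝ)+1)*ω) {C : ℝ} (hC : 0 ≤ C)
    {u : ℤ → ℝ} (hu : ∀ i, |u i| ≤ C) :
    Summable (fun i : ℤ => if θ i < t then Real.exp (-k₀*(t - θ i)) * u i else 0) ∧
    |∑' i : ℤ, (if θ i < t then Real.exp (-k₀*(t - θ i)) * u i else 0)|
      ≤ C * Real.exp (k₀*ω) / (1 - Real.exp (-k₀*ω)) := by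
  set f : ℤ → ℝ := fun i => if θ i < t then Real.exp (-k₀*(t - θ i)) * u i else 0 with hf
  set r : ℝ := Real.exp (-k₀*ω) with hrdef
  have hr0 : 0 < r := Real.exp_pos _
  have hr1 : r < 1 := by
    rw [hrdef, Real.exp_lt_one_iff]
    nlinarith
  set n : ℤ := ⌈t/ω⌉ - 1 with hn
  have hn1 : (n:ℝ)*ω < t := by
    have h1 : (n:ℝ) < t/ω := by
      rw [hn]; push_cast
      have := Int.ceil_lt_add_one (t/ω)
      linarith
    calc (n:ℝ)*ω < (t/ω)*ω := by exact mul_lt_mul_of_pos_right h1 hω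
      _ = t := by field_simp
  have hi : ∀ i : ℤ, θ i < t → i ≤ n := by
    intro i h
    have h1 : (i:ℝ)*ω < t := lt_of_le_of_lt (hθ i).1 h
    have h2 : (i:ℝ) < t/ω := (lt_div_iff₀ hω).2 h1
    have h3 : i < ⌈t/ω⌉ := Int.lt_ceil.2 h2
    omega
  set G : ℤ → ℝ := fun i => if i ≤ n then C * Real.exp (k₀*ω) * r^((n-i).toNat) else 0 with hG
  set e : ℕ → ℤ := fun j => n - j with he
  have hinj : Function.Injective e := by
    intro a b hab
    have : (a:ℤ) = b := by simp [he] at hab; omega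
    exact_mod_cast this
  have hzero : ∀ i ∉ Set.range e, G i = 0 := by
    intro i hi'
    rw [hG]
    by_cases h1 : i ≤ n
    · exfalso
      apply hi'
      refine ⟨(n - i).toNat, ?_⟩
      simp only [he]
      omega
    · simp [h1]
  have hGe : ∀ j : ℕ, G (e j) = C * Real.exp (k₀*ω) * r^j := by
    intro j
    have h1 : n - (j:ℤ) ≤ n := by omega
    have h2 : (n - (n - (j:ℤ))).toNat = j := by omega
    simp only [hG, he, h1, if_pos, h2]
  have hgeo : HasSum (fun j : ℕ => C * Real.exp (k₀*ω) * r^j)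
      ((C * Real.exp (k₀*ω)) * (1-r)⁻¹) :=
    (hasSum_geometric_of_lt_one hr0.le hr1).mul_left _
  have hGsumval : HasSum G ((C * Real.exp (k₀*ω)) * (1-r)⁻¹) := by
    refine (Function.Injective.hasSum_iff hinj hzero).1 ?_
    have : (G ∘ e) = fun j : ℕ => C * Real.exp (k₀*ω) * r^j := funext hGe
    rw [this]
    exact hgeo
  have hGsum : Summable G := hGsumval.summable
  have hbd : ∀ i : ℤ, ‖f i‖ ≤ G i := by
    intro i
    rw [hf, hG, Real.norm_eq_abs]
    show |(if θ i < t then Real.exp (-k₀*(t - θ i)) * u i else 0)|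
      ≤ (if i ≤ n then C * Real.exp (k₀*ω) * r^((n-i).toNat) else 0)
    by_cases hit : θ i < t
    · have hin := hi i hit
      rw [if_pos hit, if_pos hin]
      have hcast : ((n - i).toNat : ℝ) = (n:ℝ) - (i:ℝ) := by
        have h1 : ((n - i).toNat : ℤ) = n - i := Int.toNat_of_nonneg (by omega)
        exact_mod_cast congrArg (Int.cast : ℤ → ℝ) h1
      have hexp : Real.exp (-k₀*(t - θ i)) ≤ Real.exp (k₀*ω) * r ^ (n-i).toNat := by
        rw [hrdef, ← Real.exp_nat_mul, ← Real.exp_add, Real.exp_le_exp, hcast]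
        have h3 : θ i < ((i:ℝ)+1)*ω := (hθ i).2
        nlinarith
      calc |Real.exp (-k₀*(t - θ i)) * u i|
          = Real.exp (-k₀*(t - θ i)) * |u i| := by
            rw [abs_mul, abs_of_nonneg (Real.exp_pos _).le]
        _ ≤ (Real.exp (k₀*ω) * r ^ (n-i).toNat) * C := by
            apply mul_le_mul hexp (hu i) (abs_nonneg _)
            positivity
        _ = C * Real.exp (k₀*ω) * r^((n-i).toNat) := by ring
    · rw [if_neg hit]
      simp only [abs_zero]
      by_cases h1 : i ≤ n
      · rw [if_pos h1]; positivity
      · rw [if_neg h1]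
  have hfsum : Summable f := Summable.of_norm_bounded hGsum hbd
  have hnorm : Summable (fun i => ‖f i‖) :=
    Summable.of_nonneg_of_le (fun i => norm_nonneg _) hbd hGsum
  refine ⟨hfsum, ?_⟩
  calc |∑' i, f i| ≤ ∑' i, ‖f i‖ := by
        simpa [Real.norm_eq_abs] using norm_tsum_le_tsum_norm hnorm
    _ ≤ ∑' i, G i := Summable.tsum_le_tsum hbd hnorm hGsum
    _ = (C * Real.exp (k₀*ω)) * (1-r)⁻¹ := hGsumval.tsum_eq
    _ = C * Real.exp (k₀*ω) / (1 - Real.exp (-k₀*ω)) := by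
        rw [hrdef]; ring



/-- The Euclidean norm on `Fin n → ℝ`. -/
noncomputable def eNorm {n : ℕ} (v : Fin n → ℝ) : ℝ := Real.sqrt (∑ j, v j ^ 2)

/-- The operator `T` of the paper: coordinate `0` (the systemic arterial pressure) gets
`(Tφ)₀(t) = −∫_{−∞}^t e^{−k₀(t−s)} g₀(φ₀(s)−φ₁(s),…,φ₀(s)−φ_m(s)) ds
  + Σ_{θ_i < t} e^{−k₀(t−θ_i)} (I₀ + J₀(φ₀(θ_i)))`,
and the compartment coordinates `j = 1,…,m` (nonzero indices of `Fin (m+1)`) get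
`(Tφ)_j(t) = ∫_{−∞}^t e^{−k_j(t−s)} g_j(φ₀(s)−φ_j(s)) ds`. -/
noncomputable def Tmap (m : ℕ) (θ : ℤ → ℝ) (k : Fin (m + 1) → ℝ) (I₀ : ℝ)
    (g₀ : (Fin m → ℝ) → ℝ) (g : Fin (m + 1) → ℝ → ℝ) (J₀ : ℝ → ℝ)
    (φ : ℝ → Fin (m + 1) → ℝ) : ℝ → Fin (m + 1) → ℝ := fun t j =>
  if j = 0 then
    -(∫ s in Set.Iic t, Real.exp (-(k 0) * (t - s)) * g₀ (fun i => φ s 0 - φ s i.succ))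
      + ∑' i : ℤ, (if θ i < t then Real.exp (-(k 0) * (t - θ i)) * (I₀ + J₀ (φ (θ i) 0)) else 0)
  else
    ∫ s in Set.Iic t, Real.exp (-(k j) * (t - s)) * g j (φ s 0 - φ s j)

/-- The set `Ω`: bounded measurable functions `φ : ℝ → ℝ^{m+1}` with
`|φ₀(t)| ≤ m₀/k₀ + (I₀ + m_J)·e^{k₀ω}/(1 − e^{−k₀ω})` and `|φ_j(t)| ≤ m_j/k_j`. -/
def OmegaSet (m : ℕ) (ω : ℝ) (k mc : Fin (m + 1) → ℝ) (I₀ mJ : ℝ) :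
    Set (ℝ → Fin (m + 1) → ℝ) :=
  {φ | Measurable φ ∧ (∃ B, ∀ t, eNorm (φ t) ≤ B) ∧ ∀ t,
    |φ t 0| ≤ mc 0 / k 0 + (I₀ + mJ) * Real.exp (k 0 * ω) / (1 - Real.exp (-(k 0) * ω)) ∧
    ∀ j, j ≠ 0 → |φ t j| ≤ mc j / k j}

/-- For every bounded Lebesgue-measurable `φ : ℝ → ℝ^{m+1}` and every `t ∈ ℝ`,
`|(Tφ)₀(t)| ≤ m₀/k₀ + (I₀ + m_J)·e^{k₀ω}/(1 − e^{−k₀ω})` and `|(Tφ)_j(t)| ≤ m_j/k_j`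
for `j = 1,…,m`; in particular `T` maps bounded measurable functions into the set `Ω`. -/
theorem stmt2
    (m : ℕ) (hm : 1 ≤ m) (ω : ℝ) (hω : 0 < ω) (θ : ℤ → ℝ)
    (hθ : ∀ i : ℤ, (i : ℝ) * ω ≤ θ i ∧ θ i < ((i : ℝ) + 1) * ω)
    (k : Fin (m + 1) → ℝ) (hk : ∀ j, 0 < k j) (I₀ : ℝ) (hI : 0 < I₀)
    (g₀ : (Fin m → ℝ) → ℝ) (g : Fin (m + 1) → ℝ → ℝ) (J₀ : ℝ → ℝ)
    (l : Fin (m + 1) → ℝ) (lJ : ℝ) (mc : Fin (m + 1) → ℝ) (mJ : ℝ)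
    (hl : ∀ j, 0 ≤ l j) (hlJ : 0 ≤ lJ) (hmc : ∀ j, 0 ≤ mc j) (hmJ : 0 ≤ mJ)
    (hg₀lip : ∀ z w : Fin m → ℝ, |g₀ z - g₀ w| ≤ l 0 * eNorm (fun i => z i - w i))
    (hglip : ∀ j, j ≠ 0 → ∀ a b : ℝ, |g j a - g j b| ≤ l j * |a - b|)
    (hJlip : ∀ a b : ℝ, |J₀ a - J₀ b| ≤ lJ * |a - b|)
    (hg₀bd : ∀ z, |g₀ z| ≤ mc 0)
    (hgbd : ∀ j, j ≠ 0 → ∀ a, |g j a| ≤ mc j)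
    (hJbd : ∀ a, |J₀ a| ≤ mJ)
    (φ : ℝ → Fin (m + 1) → ℝ) (hφmeas : Measurable φ)
    (hφbd : ∃ B, ∀ t, eNorm (φ t) ≤ B) :
    (∀ t : ℝ,
      |Tmap m θ k I₀ g₀ g J₀ φ t 0| ≤ mc 0 / k 0 + (I₀ + mJ) * Real.exp (k 0 * ω) / (1 - Real.exp (-(k 0) * ω)) ∧
      ∀ j, j ≠ 0 → |Tmap m θ k I₀ g₀ g J₀ φ t j| ≤ mc j / k j) ∧
    Tmap m θ k I₀ g₀ g J₀ φ ∈ OmegaSet m ω k mc I₀ mJ := by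
  have hk0 := hk 0
  have hub : ∀ i : ℤ, |I₀ + J₀ (φ (θ i) 0)| ≤ I₀ + mJ := by
    intro i
    calc |I₀ + J₀ (φ (θ i) 0)| ≤ |I₀| + |J₀ (φ (θ i) 0)| := abs_add_le _ _
      _ ≤ I₀ + mJ := by rw [abs_of_pos hI]; exact add_le_add le_rfl (hJbd _)
  have hCnn : (0:ℝ) ≤ I₀ + mJ := by positivity
  have hpulse := fun t : ℝ =>
    myPulse (t := t) hk0 hω hθ hCnn (u := fun i => I₀ + J₀ (φ (θ i) 0)) hub
  -- part A: pointwise bounds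
  have partA : ∀ t : ℝ,
      |Tmap m θ k I₀ g₀ g J₀ φ t 0| ≤ mc 0 / k 0 + (I₀ + mJ) * Real.exp (k 0 * ω) / (1 - Real.exp (-(k 0) * ω)) ∧
      ∀ j, j ≠ 0 → |Tmap m θ k I₀ g₀ g J₀ φ t j| ≤ mc j / k j := by
    intro t
    constructor
    · have he : Tmap m θ k I₀ g₀ g J₀ φ t 0 =
        -(∫ s in Set.Iic t, Real.exp (-(k 0) * (t - s)) * g₀ (fun i => φ s 0 - φ s i.succ))
          + ∑' i : ℤ, (if θ i < t then Real.exp (-(k 0) * (t - θ i)) * (I₀ + J₀ (φ (θ i) 0)) else 0) := by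
        simp [Tmap]
      rw [he]
      calc |_ + _| ≤ |-(∫ s in Set.Iic t, Real.exp (-(k 0) * (t - s)) * g₀ (fun i => φ s 0 - φ s i.succ))|
            + |∑' i : ℤ, (if θ i < t then Real.exp (-(k 0) * (t - θ i)) * (I₀ + J₀ (φ (θ i) 0)) else 0)| :=
          abs_add_le _ _
        _ ≤ mc 0 / k 0 + (I₀ + mJ) * Real.exp (k 0 * ω) / (1 - Real.exp (-(k 0) * ω)) := by
          apply add_le_add
          · rw [abs_neg]
            exact myAbsInt hk0 (hmc 0) (fun s => hg₀bd _)
          · exact (hpulse t).2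
    · intro j hj
      have he : Tmap m θ k I₀ g₀ g J₀ φ t j =
          ∫ s in Set.Iic t, Real.exp (-(k j) * (t - s)) * g j (φ s 0 - φ s j) := by
        simp [Tmap, hj]
      rw [he]
      exact myAbsInt (hk j) (hmc j) (fun s => hgbd j hj _)
  -- measurability of components of φ
  have hφ0 : Measurable fun s => φ s (0 : Fin (m+1)) := (measurable_pi_apply 0).comp hφmeas
  -- continuity of g₀
  have hEnorm : ∀ z w : Fin m → ℝ, eNorm (fun i => z i - w i) ≤ Real.sqrt m * dist z w := by
    intro z w
    have hstep : ∀ i : Fin m, (z i - w i)^2 ≤ (dist z w)^2 := by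
      intro i
      have h1 : |z i - w i| ≤ dist z w := by
        rw [← Real.dist_eq]
        exact dist_le_pi_dist z w i
      calc (z i - w i)^2 = |z i - w i|^2 := (sq_abs _).symm
        _ ≤ (dist z w)^2 := pow_le_pow_left₀ (abs_nonneg _) h1 2
    have h2 : eNorm (fun i => z i - w i) ≤ Real.sqrt (∑ _i : Fin m, (dist z w)^2) := by
      rw [eNorm]
      exact Real.sqrt_le_sqrt (Finset.sum_le_sum (fun i _ => hstep i))
    have h3 : Real.sqrt (∑ _i : Fin m, (dist z w)^2) = Real.sqrt m * dist z w := by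
      rw [Finset.sum_const, Finset.card_univ, Fintype.card_fin, nsmul_eq_mul,
        Real.sqrt_mul (by positivity), Real.sqrt_sq dist_nonneg]
    exact h2.trans h3.le
  have hg₀cont : Continuous g₀ := by
    have hlip : LipschitzWith (l 0 * Real.sqrt m).toNNReal g₀ := by
      apply LipschitzWith.of_dist_le_mul
      intro z w
      rw [Real.dist_eq]
      have h4 : |g₀ z - g₀ w| ≤ l 0 * (Real.sqrt m * dist z w) :=
        (hg₀lip z w).trans (mul_le_mul_of_nonneg_left (hEnorm z w) (hl 0))
      have h5 : l 0 * Real.sqrt m ≤ ((l 0 * Real.sqrt m).toNNReal : ℝ) := by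
        rw [Real.coe_toNNReal']
        exact le_max_left _ _
      calc |g₀ z - g₀ w| ≤ l 0 * (Real.sqrt m * dist z w) := h4
        _ = (l 0 * Real.sqrt m) * dist z w := by ring
        _ ≤ ((l 0 * Real.sqrt m).toNNReal : ℝ) * dist z w :=
            mul_le_mul_of_nonneg_right h5 dist_nonneg
    exact hlip.continuous
  -- measurability of Tmap φ
  have hTmeas : Measurable (Tmap m θ k I₀ g₀ g J₀ φ) := by
    apply measurable_pi_lambda
    intro j
    by_cases hj : j = 0
    · subst hj
      have he : (fun t => Tmap m θ k I₀ g₀ g J₀ φ t 0) = fun t =>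
          -(∫ s in Set.Iic t, Real.exp (-(k 0) * (t - s)) * g₀ (fun i => φ s 0 - φ s i.succ))
          + ∑' i : ℤ, (if θ i < t then Real.exp (-(k 0) * (t - θ i)) * (I₀ + J₀ (φ (θ i) 0)) else 0) := by
        funext t; simp [Tmap]
      rw [he]
      apply Measurable.add
      · apply Measurable.neg
        apply myMeasConv
        apply hg₀cont.measurable.comp
        apply measurable_pi_lambda
        intro i
        exact hφ0.sub ((measurable_pi_apply i.succ).comp hφmeas)
      · apply myMeasTsum
        · intro i
          apply Measurable.ite
          · exact measurableSet_Ioi (a := θ i)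
          · exact (Real.measurable_exp.comp
              ((measurable_id.sub_const (θ i)).const_mul (-(k 0)))).mul_const _
          · exact measurable_const
        · intro t
          exact (hpulse t).1
    · have he : (fun t => Tmap m θ k I₀ g₀ g J₀ φ t j) = fun t =>
          ∫ s in Set.Iic t, Real.exp (-(k j) * (t - s)) * g j (φ s 0 - φ s j) := by
        funext t; simp [Tmap, hj]
      rw [he]
      apply myMeasConv
      have hgj : Continuous (g j) := by
        have : LipschitzWith (l j).toNNReal (g j) := by
          apply LipschitzWith.of_dist_le_mul
          intro a b
          rw [Real.dist_eq, Real.dist_eq]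
          calc |g j a - g j b| ≤ l j * |a - b| := hglip j hj a b
            _ ≤ (l j).toNNReal * |a - b| := by
              apply mul_le_mul_of_nonneg_right _ (abs_nonneg _)
              rw [Real.coe_toNNReal']
              exact le_max_left _ _
        exact this.continuous
      exact hgj.measurable.comp (hφ0.sub ((measurable_pi_apply j).comp hφmeas))
  -- boundedness
  have hTbd : ∃ B, ∀ t, eNorm (Tmap m θ k I₀ g₀ g J₀ φ t) ≤ B := by
    refine ⟨Real.sqrt (∑ j, (if j = 0 then
        mc 0 / k 0 + (I₀ + mJ) * Real.exp (k 0 * ω) / (1 - Real.exp (-(k 0) * ω))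
      else mc j / k j)^2), fun t => ?_⟩
    rw [eNorm]
    apply Real.sqrt_le_sqrt
    apply Finset.sum_le_sum
    intro j _
    have hb : |Tmap m θ k I₀ g₀ g J₀ φ t j| ≤ (if j = 0 then
        mc 0 / k 0 + (I₀ + mJ) * Real.exp (k 0 * ω) / (1 - Real.exp (-(k 0) * ω))
      else mc j / k j) := by
      by_cases hj : j = 0
      · rw [if_pos hj, hj]
        exact (partA t).1
      · rw [if_neg hj]
        exact (partA t).2 j hj
    calc (Tmap m θ k I₀ g₀ g J₀ φ t j)^2 = |Tmap m θ k I₀ g₀ g J₀ φ t j|^2 := (sq_abs _).symm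
      _ ≤ _ := pow_le_pow_left₀ (abs_nonneg _) hb 2
  exact ⟨partA, hTmeas, hTbd, partA⟩
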